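/- arXiv:1912.04073 — 3 statements merged into one kernel-verified Lean document; each statement's English description precedes it below -/
import Mathlib

section
/- Let Ω ⊂ ℝⁿ be a bounded domain that is (δ,R)-Reifenberg flat with 0 < δ ≤ 1/8. Then for every x ∈ Ω and 0 < r ≤ R one has |B_r(x)| / |Ω ∩ B_r(x)| ≤ (2/(1-δ))ⁿ ≤ (16/7)ⁿ, and for every x ∈ ∂Ω and 0 < r ≤ R one has |Ωᶜ ∩ B_r(x)| / |B_r(x)| ≥ ((1-δ)/2)ⁿ ≥ (7/16)ⁿ. -/
set_option maxHeartbeats 1600000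

open MeasureTheory Set Metric
open scoped RealInnerProductSpace

private lemma halfvol (n : ℕ) (c ν : EuclideanSpace ℝ (Fin n)) (s : ℝ) :
    volume (ball c s) ≤ 2 * volume {y ∈ ball c s | 0 ≤ ⟪ν, y - c⟫} := by
  set S : Set (EuclideanSpace ℝ (Fin n)) := {y ∈ ball c s | 0 ≤ ⟪ν, y - c⟫} with hS
  have hcont : Continuous fun y : EuclideanSpace ℝ (Fin n) => ⟪ν, y - c⟫ :=
    Continuous.inner continuous_const (continuous_id.sub continuous_const)
  have hSm : MeasurableSet S :=
    measurableSet_ball.inter (isClosed_le continuous_const hcont).measurableSet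
  have hφ : MeasurePreserving (fun y : EuclideanSpace ℝ (Fin n) => (c + c) - y)
      volume volume := by
    have := (measurePreserving_add_left (volume : Measure (EuclideanSpace ℝ (Fin n)))
      (c + c)).comp (Measure.measurePreserving_neg _)
    simpa [Function.comp_def, sub_eq_add_neg] using this
  have hpre : (fun y : EuclideanSpace ℝ (Fin n) => (c + c) - y) ⁻¹' S
      = {y ∈ ball c s | ⟪ν, y - c⟫ ≤ 0} := by
    ext y
    simp only [mem_preimage, hS, mem_setOf_eq, mem_ball, Set.mem_sep_iff]
    have e2 : dist (c + c - y) c = dist y c := by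
      rw [dist_eq_norm, dist_eq_norm]
      have : c + c - y - c = -(y - c) := by abel
      rw [this, norm_neg]
    have e3 : ⟪ν, c + c - y - c⟫ = -⟪ν, y - c⟫ := by
      rw [← inner_neg_right]; congr 1; abel
    rw [e2, e3]
    constructor
    · rintro ⟨h1, h2⟩; exact ⟨h1, by linarith⟩
    · rintro ⟨h1, h2⟩; exact ⟨h1, by linarith⟩
  have hsub : ball c s ⊆ S ∪ ((fun y : EuclideanSpace ℝ (Fin n) => (c + c) - y) ⁻¹' S) := by
    intro y hy
    rw [hpre]
    rcases le_total 0 ⟪ν, y - c⟫ with h | h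
    · exact Or.inl ⟨hy, h⟩
    · exact Or.inr ⟨hy, h⟩
  calc volume (ball c s) ≤ volume (S ∪ _) := measure_mono hsub
    _ ≤ volume S + volume ((fun y : EuclideanSpace ℝ (Fin n) => (c + c) - y) ⁻¹' S) :=
        measure_union_le _ _
    _ = volume S + volume S := by rw [hφ.measure_preimage hSm.nullMeasurableSet]
    _ = 2 * volume S := by ring

theorem stmt_2 (n : ℕ) (hn : 2 ≤ n) (δ R : ℝ) (hδ : 0 < δ) (hδ' : δ ≤ 1 / 8) (hR : 0 < R)
    (Ω : Set (EuclideanSpace ℝ (Fin n))) (hopen : IsOpen Ω) (hconn : IsConnected Ω)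
    (hbdd : Bornology.IsBounded Ω)
    (hreif : ∀ x₀ ∈ frontier Ω, ∀ r : ℝ, 0 < r → r ≤ R →
      ∃ ν : EuclideanSpace ℝ (Fin n), ‖ν‖ = 1 ∧
        {y ∈ Metric.ball x₀ r | δ * r < ⟪ν, y - x₀⟫} ⊆ Metric.ball x₀ r ∩ Ω ∧
        Metric.ball x₀ r ∩ Ω ⊆ {y ∈ Metric.ball x₀ r | -δ * r < ⟪ν, y - x₀⟫}) :
    (∀ x ∈ Ω, ∀ r : ℝ, 0 < r → r ≤ R →
        volume (Metric.ball x r) ≤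
          ENNReal.ofReal ((2 / (1 - δ)) ^ n) * volume (Ω ∩ Metric.ball x r)) ∧
      ((2 / (1 - δ)) ^ n ≤ (16 / 7 : ℝ) ^ n) ∧
      (∀ x ∈ frontier Ω, ∀ r : ℝ, 0 < r → r ≤ R →
        ENNReal.ofReal (((1 - δ) / 2) ^ n) * volume (Metric.ball x r) ≤
          volume (Ωᶜ ∩ Metric.ball x r)) ∧
      ((7 / 16 : ℝ) ^ n ≤ ((1 - δ) / 2) ^ n) := by
  haveI : Nonempty (Fin n) := ⟨⟨0, by omega⟩⟩
  have hδ1 : δ < 1 := by linarith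
  have h1δ : (0:ℝ) < 1 - δ := by linarith
  set V₁ := volume (ball (0 : EuclideanSpace ℝ (Fin n)) 1) with hV₁
  have hvolball : ∀ (z : EuclideanSpace ℝ (Fin n)) (s : ℝ), 0 ≤ s →
      volume (ball z s) = ENNReal.ofReal (s ^ n) * V₁ := by
    intro z s hs
    rw [Measure.addHaar_ball _ _ hs, finrank_euclideanSpace_fin]
  -- frontier facts
  have hne : Ω.Nonempty := hconn.nonempty
  have hfne : (frontier Ω).Nonempty := by
    by_contra h
    rw [not_nonempty_iff_eq_empty] at h
    have hclopen : IsClopen Ω := isClopen_iff_frontier_eq_empty.mpr h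
    rcases isClopen_iff.mp hclopen with h1 | h1
    · exact hne.ne_empty h1
    · rw [h1] at hbdd
      exact NormedSpace.unbounded_univ ℝ (EuclideanSpace ℝ (Fin n)) hbdd
  have hcomp : IsCompact (frontier Ω) :=
    Metric.isCompact_of_isClosed_isBounded isClosed_frontier
      (hbdd.closure.subset frontier_subset_closure)
  have hd0 : ∀ x ∈ Ω, 0 < infDist x (frontier Ω) := by
    intro x hx
    exact (isClosed_frontier.notMem_iff_infDist_pos hfne).mp
      (by rw [hopen.frontier_eq]; exact fun h => h.2 hx)
  have hballin : ∀ x ∈ Ω, ball x (infDist x (frontier Ω)) ⊆ Ω := by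
    intro x hx
    have hsub : ball x (infDist x (frontier Ω)) ⊆ Ω ∪ (closure Ω)ᶜ := by
      intro y hy
      rcases em (y ∈ closure Ω) with h1 | h1
      · left
        rcases em (y ∈ Ω) with h2 | h2
        · exact h2
        · exfalso
          have hyf : y ∈ frontier Ω := by rw [hopen.frontier_eq]; exact ⟨h1, h2⟩
          have := infDist_le_dist_of_mem hyf (x := x)
          rw [mem_ball, dist_comm] at hy
          linarith
      · exact Or.inr h1
    exact (convex_ball x (infDist x (frontier Ω))).isPreconnected.subset_left_of_subset_union
      hopen isClosed_closure.isOpen_compl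
      (disjoint_compl_right.mono_left subset_closure) hsub
      ⟨x, mem_ball_self (hd0 x hx), hx⟩
  refine ⟨?_, ?_, ?_, ?_⟩
  · -- part 1
    intro x hx r hr hrR
    set d := infDist x (frontier Ω) with hdd
    have hd := hd0 x hx
    rcases le_or_gt ((1 - δ) * r / 2) d with hcase | hcase
    · -- interior ball case
      have hsub : ball x ((1 - δ) * r / 2) ⊆ Ω ∩ ball x r := by
        intro y hy
        refine ⟨hballin x hx (mem_ball.mpr (lt_of_lt_of_le (mem_ball.mp hy) hcase)), ?_⟩
        rw [mem_ball] at hy ⊢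
        nlinarith [mem_ball.mp hy]
      calc volume (ball x r) = ENNReal.ofReal (r ^ n) * V₁ := hvolball x r hr.le
        _ = ENNReal.ofReal ((2 / (1 - δ)) ^ n * ((1 - δ) * r / 2) ^ n) * V₁ := by
            congr 2
            rw [← mul_pow]
            congr 1
            field_simp
        _ = ENNReal.ofReal ((2 / (1 - δ)) ^ n) * (ENNReal.ofReal (((1 - δ) * r / 2) ^ n) * V₁) := by
            rw [ENNReal.ofReal_mul (pow_nonneg (by positivity) n), mul_assoc]
        _ = ENNReal.ofReal ((2 / (1 - δ)) ^ n) * volume (ball x ((1 - δ) * r / 2)) := by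
            rw [hvolball x _ (by positivity)]
        _ ≤ ENNReal.ofReal ((2 / (1 - δ)) ^ n) * volume (Ω ∩ ball x r) :=
            mul_le_mul_right (measure_mono hsub) _
    · -- boundary cases
      obtain ⟨x₀, hx₀, hdx⟩ := hcomp.exists_infDist_eq_dist hfne x
      rw [← hdd] at hdx
      obtain ⟨ν, hν, hlow, hup⟩ := hreif x₀ hx₀ r hr hrR
      have hxx₀ : ‖x - x₀‖ = d := by rw [hdx, dist_eq_norm]
      -- key reduction
      have key : ∀ t s' : ℝ, δ * r < t → 0 < s' → s' + t ≤ r →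
          ‖(x₀ + t • ν) - x‖ + s' ≤ r → (177/250) * (1 - δ) * r ≤ s' →
          volume (ball x r) ≤
            ENNReal.ofReal ((2 / (1 - δ)) ^ n) * volume (Ω ∩ ball x r) := by
        intro t s' ht hs'0 hs't hcx hs'big
        set c : EuclideanSpace ℝ (Fin n) := x₀ + t • ν with hc
        have ht0 : 0 < t := lt_of_le_of_lt (by positivity) ht
        have hcx₀ : ‖c - x₀‖ = t := by
          rw [hc]
          have : x₀ + t • ν - x₀ = t • ν := by abel
          rw [this, norm_smul, hν, Real.norm_eq_abs, abs_of_pos ht0, mul_one]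
        have hsubHB : {y ∈ ball c s' | 0 ≤ ⟪ν, y - c⟫} ⊆ Ω ∩ ball x r := by
          rintro y ⟨hy, hy2⟩
          rw [mem_ball, dist_eq_norm] at hy
          have hyx₀ : ‖y - x₀‖ < r := by
            have e : y - x₀ = (y - c) + (c - x₀) := by abel
            rw [e]
            calc ‖(y - c) + (c - x₀)‖ ≤ ‖y - c‖ + ‖c - x₀‖ := norm_add_le _ _
              _ < s' + t := by rw [hcx₀]; linarith
              _ ≤ r := hs't
          have hinner : δ * r < ⟪ν, y - x₀⟫ := by
            have e : y - x₀ = (y - c) + t • ν := by rw [hc]; abel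
            rw [e, inner_add_right, inner_smul_right, real_inner_self_eq_norm_sq, hν]
            nlinarith
          have hyΩ : y ∈ Ω := (hlow ⟨mem_ball.mpr (by rwa [dist_eq_norm]), hinner⟩).2
          have hyx : ‖y - x‖ < r := by
            have e : y - x = (y - c) + (c - x) := by abel
            rw [e]
            calc ‖(y - c) + (c - x)‖ ≤ ‖y - c‖ + ‖c - x‖ := norm_add_le _ _
              _ < s' + ‖c - x‖ := by linarith
              _ ≤ r := by rw [hc] at *; linarith [hcx]
          exact ⟨hyΩ, mem_ball.mpr (by rwa [dist_eq_norm])⟩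
        have h2 : volume (ball c s') ≤ 2 * volume (Ω ∩ ball x r) :=
          le_trans (halfvol n c ν s') (mul_le_mul_right (measure_mono hsubHB) 2)
        -- numeric inequality : 2 * r^n ≤ (2/(1-δ))^n * s'^n
        have hnum : 2 * r ^ n ≤ (2 / (1 - δ)) ^ n * s' ^ n := by
          have hu : (177/125 : ℝ) * r ≤ 2 / (1 - δ) * s' := by
            rw [show (2:ℝ)/(1-δ)*s' = 2*s'/(1-δ) by ring, le_div_iff₀ h1δ]
            nlinarith
          have h1 : ((177/125 : ℝ) * r) ^ n ≤ (2 / (1 - δ) * s') ^ n :=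
            pow_le_pow_left₀ (by positivity) hu n
          have h2' : (2:ℝ) * r ^ n ≤ ((177/125 : ℝ) * r) ^ n := by
            rw [mul_pow]
            have h3 : (2:ℝ) ≤ (177/125 : ℝ) ^ n := by
              calc (2:ℝ) ≤ (177/125 : ℝ) ^ 2 := by norm_num
                _ ≤ (177/125 : ℝ) ^ n := pow_le_pow_right₀ (by norm_num) hn
            exact mul_le_mul_of_nonneg_right h3 (pow_nonneg hr.le n)
          calc (2:ℝ) * r ^ n ≤ ((177/125 : ℝ) * r) ^ n := h2'
            _ ≤ (2 / (1 - δ) * s') ^ n := h1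
            _ = (2 / (1 - δ)) ^ n * s' ^ n := mul_pow _ _ _
        -- final chain
        have hmain : 2 * volume (ball x r) ≤
            2 * (ENNReal.ofReal ((2 / (1 - δ)) ^ n) * volume (Ω ∩ ball x r)) := by
          calc 2 * volume (ball x r) = 2 * (ENNReal.ofReal (r ^ n) * V₁) := by
                rw [hvolball x r hr.le]
            _ = ENNReal.ofReal (2 * r ^ n) * V₁ := by
                rw [ENNReal.ofReal_mul (by norm_num), ← mul_assoc]
                norm_num
            _ ≤ ENNReal.ofReal ((2 / (1 - δ)) ^ n * s' ^ n) * V₁ := by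
                exact mul_le_mul_left (ENNReal.ofReal_le_ofReal hnum) _
            _ = ENNReal.ofReal ((2 / (1 - δ)) ^ n) * (ENNReal.ofReal (s' ^ n) * V₁) := by
                rw [ENNReal.ofReal_mul (pow_nonneg (by positivity) n), mul_assoc]
            _ = ENNReal.ofReal ((2 / (1 - δ)) ^ n) * volume (ball c s') := by
                rw [hvolball c s' hs'0.le]
            _ ≤ ENNReal.ofReal ((2 / (1 - δ)) ^ n) * (2 * volume (Ω ∩ ball x r)) :=
                mul_le_mul_right h2 _
            _ = 2 * (ENNReal.ofReal ((2 / (1 - δ)) ^ n) * volume (Ω ∩ ball x r)) := by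
                ring
        exact (ENNReal.mul_le_mul_iff_right (by norm_num) (by norm_num)).mp hmain
      rcases le_or_gt d ((29/100) * (1 - δ) * r) with hcase2 | hcase3
      · -- case 2 : d small
        refine key (δ * r + (1/500) * (1 - δ) * r) (r - (δ * r + (1/500) * (1 - δ) * r) - d)
          (by nlinarith) (by nlinarith) (by nlinarith) ?_ (by nlinarith)
        have : ‖(x₀ + (δ * r + (1/500) * (1 - δ) * r) • ν) - x‖ ≤
            (δ * r + (1/500) * (1 - δ) * r) + d := by
          have e : (x₀ + (δ * r + (1/500) * (1 - δ) * r) • ν) - x =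
              (δ * r + (1/500) * (1 - δ) * r) • ν - (x - x₀) := by abel
          rw [e]
          calc ‖(δ * r + (1/500) * (1 - δ) * r) • ν - (x - x₀)‖
              ≤ ‖(δ * r + (1/500) * (1 - δ) * r) • ν‖ + ‖x - x₀‖ := norm_sub_le _ _
            _ = (δ * r + (1/500) * (1 - δ) * r) + d := by
                rw [norm_smul, hν, Real.norm_eq_abs, abs_of_pos (by nlinarith), mul_one, hxx₀]
        linarith
      · -- case 3 : d large, use inner product bound
        set p := ⟪ν, x - x₀⟫ with hp
        have hpd : p ≤ d := by
          calc p ≤ ‖ν‖ * ‖x - x₀‖ := real_inner_le_norm _ _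
            _ = d := by rw [hν, one_mul, hxx₀]
        have hplow : d - δ * r ≤ p := by
          by_contra hcon
          push_neg at hcon
          set ε := min (d/2) ((d - δ * r - p)/2) with hε
          have hε0 : 0 < ε := lt_min (by linarith) (by linarith)
          have hεd : ε < d := lt_of_le_of_lt (min_le_left _ _) (by linarith)
          have hx' : x - (d - ε) • ν ∈ Ω := by
            apply hballin x hx
            rw [mem_ball, dist_eq_norm]
            have e : x - (d - ε) • ν - x = -((d - ε) • ν) := by abel
            rw [e, norm_neg, norm_smul, hν, Real.norm_eq_abs, abs_of_pos (by linarith), mul_one]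
            linarith
          have hx'ball : x - (d - ε) • ν ∈ ball x₀ r := by
            rw [mem_ball, dist_eq_norm]
            have e : x - (d - ε) • ν - x₀ = (x - x₀) - (d - ε) • ν := by abel
            rw [e]
            calc ‖(x - x₀) - (d - ε) • ν‖ ≤ ‖x - x₀‖ + ‖(d - ε) • ν‖ := norm_sub_le _ _
              _ = d + (d - ε) := by
                  rw [hxx₀, norm_smul, hν, Real.norm_eq_abs, abs_of_pos (by linarith), mul_one]
              _ < r := by nlinarith
          have := (hup ⟨hx'ball, hx'⟩).2
          have e : ⟪ν, x - (d - ε) • ν - x₀⟫ = p - (d - ε) := by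
            have e2 : x - (d - ε) • ν - x₀ = (x - x₀) - (d - ε) • ν := by abel
            rw [e2, inner_sub_right, inner_smul_right, real_inner_self_eq_norm_sq, hν, hp]
            ring
          rw [e] at this
          have hεle : ε ≤ (d - δ * r - p)/2 := min_le_right _ _
          linarith
        have hp0 : 0 < p := by nlinarith
        set t := d^2 / (2 * p) with htdef
        have ht0 : 0 < t := by positivity
        have h2tp : 2 * t * p = d^2 := by
          rw [htdef]; field_simp
        have htlow : δ * r < t := by
          have h1 : d / 2 ≤ t := by
            rw [htdef, le_div_iff₀ (by positivity)]
            nlinarith [mul_nonneg (sub_nonneg.mpr hpd) hd.le]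
          nlinarith [mul_nonneg (sub_nonneg.mpr hδ') hr.le]
        have hT : (0:ℝ) ≤ (292/1000 + (708/1000) * δ) * r := by positivity
        have hq : d^2 ≤ 2 * (d - δ * r) * ((292/1000 + (708/1000) * δ) * r) := by
          nlinarith [mul_nonneg (sub_nonneg.mpr hcase3.le) (sub_nonneg.mpr hcase.le),
            mul_nonneg (mul_nonneg (sub_nonneg.mpr hδ') hr.le) hr.le,
            mul_nonneg (mul_nonneg (sub_nonneg.mpr hδ') hδ.le) (mul_nonneg hr.le hr.le),
            mul_pos hr hr, mul_pos hδ hr]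
        have htup : t ≤ (292/1000 + (708/1000) * δ) * r := by
          rw [htdef, div_le_iff₀ (by positivity)]
          nlinarith [mul_le_mul_of_nonneg_right hplow hT]
        have hcxt : ‖(x₀ + t • ν) - x‖ ≤ t := by
          have e : (x₀ + t • ν) - x = t • ν - (x - x₀) := by abel
          have hsq : ‖(x₀ + t • ν) - x‖^2 = t^2 - 2*t*p + d^2 := by
            rw [e, norm_sub_sq_real, norm_smul, hν, Real.norm_eq_abs,
              abs_of_pos ht0, mul_one, real_inner_smul_left, hxx₀]
            rw [← hp]
            ring
          rw [h2tp] at hsq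
          have hsq2 : ‖(x₀ + t • ν) - x‖^2 = t^2 := by rw [hsq]; ring
          nlinarith [norm_nonneg ((x₀ + t • ν) - x)]
        refine key t (r - t) htlow (by nlinarith) (by linarith) (by linarith) (by nlinarith)
  · -- part 2
    apply pow_le_pow_left₀ (by positivity)
    rw [div_le_div_iff₀ h1δ (by norm_num)]
    nlinarith
  · -- part 3
    intro x hx r hr hrR
    obtain ⟨ν, hν, hlow, hup⟩ := hreif x hx r hr hrR
    set s := (1 - δ) * r / 2 with hs
    have hs0 : 0 < s := by rw [hs]; nlinarith
    set z : EuclideanSpace ℝ (Fin n) := x - ((1 + δ) * r / 2) • ν with hz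
    have hzx : ‖z - x‖ = (1 + δ) * r / 2 := by
      rw [hz]
      have : x - ((1 + δ) * r / 2) • ν - x = -(((1 + δ) * r / 2) • ν) := by abel
      rw [this, norm_neg, norm_smul, hν, Real.norm_eq_abs, abs_of_pos (by positivity), mul_one]
    have hsub : ball z s ⊆ Ωᶜ ∩ ball x r := by
      intro y hy
      rw [mem_ball, dist_eq_norm] at hy
      have hyx : ‖y - x‖ < r := by
        have e : y - x = (y - z) + (z - x) := by abel
        rw [e]
        calc ‖(y - z) + (z - x)‖ ≤ ‖y - z‖ + ‖z - x‖ := norm_add_le _ _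
          _ < s + (1 + δ) * r / 2 := by rw [hzx]; linarith
          _ = r := by rw [hs]; ring
      have hyball : y ∈ ball x r := by rwa [mem_ball, dist_eq_norm]
      have hinner : ⟪ν, y - x⟫ < -δ * r := by
        have e : y - x = (y - z) - (((1 + δ) * r / 2) • ν) := by rw [hz]; abel
        rw [e, inner_sub_right, inner_smul_right, real_inner_self_eq_norm_sq]
        have h1 : ⟪ν, y - z⟫ ≤ ‖y - z‖ := by
          calc ⟪ν, y - z⟫ ≤ ‖ν‖ * ‖y - z‖ := real_inner_le_norm _ _
            _ = ‖y - z‖ := by rw [hν, one_mul]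
        rw [hν]
        nlinarith
      refine ⟨fun hyΩ => ?_, hyball⟩
      have := (hup ⟨hyball, hyΩ⟩).2
      linarith
    calc ENNReal.ofReal (((1 - δ) / 2) ^ n) * volume (ball x r)
        = ENNReal.ofReal (((1 - δ) / 2) ^ n) * (ENNReal.ofReal (r ^ n) * V₁) := by
          rw [hvolball x r hr.le]
      _ = ENNReal.ofReal (s ^ n) * V₁ := by
          rw [← mul_assoc, ← ENNReal.ofReal_mul (pow_nonneg (by nlinarith) n), ← mul_pow, hs]
          ring_nf
      _ = volume (ball z s) := (hvolball z s hs0.le).symm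
      _ ≤ volume (Ωᶜ ∩ ball x r) := measure_mono hsub
  · -- part 4
    apply pow_le_pow_left₀ (by norm_num)
    linarith
end

section
/- Let p : ℝⁿ → ℝ be a continuous function. Then p is log-Hölder continuous on Ω, i.e. there exists c_l > 0 with |p(x) − p(y)| ≤ c_l / (−log|x−y|) for all x,y ∈ Ω with |x−y| ≤ 1/2, if and only if there exists a nondecreasing concave function ω : [0,∞) → [0,∞) with ω(0) = 0 such that |p(x) − p(y)| ≤ ω(|x−y|) for all x,y ∈ Ω and sup_{0 < r ≤ 1/2} ω(r) log(1/r) ≤ c̃_l for some constant c̃_l > 0. -/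
open Set

lemma concave_aux (C : ℝ) (hC : 0 ≤ C) :
    ConcaveOn ℝ (Set.Ioc (0:ℝ) 1) (fun s => C / (2 - Real.log s)) := by
  have hden : ∀ s : ℝ, 0 < s → s ≤ 1 → 0 < 2 - Real.log s := by
    intro s hs hs1
    have := Real.log_nonpos hs.le hs1
    linarith
  have hint : interior (Set.Ioc (0:ℝ) 1) = Set.Ioo (0:ℝ) 1 := interior_Ioc
  refine concaveOn_of_hasDerivWithinAt2_nonpos (f' := fun s => C / (s * (2 - Real.log s)^2))
    (f'' := fun s => C * Real.log s / (s^2 * (2 - Real.log s)^3)) (convex_Ioc 0 1) ?_ ?_ ?_ ?_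
  · -- continuity
    apply ContinuousOn.div continuousOn_const
    · exact continuousOn_const.sub (Real.continuousOn_log.mono (fun s hs => ne_of_gt hs.1))
    · exact fun s hs => (hden s hs.1 hs.2).ne'
  · rw [hint]
    intro x hx
    have hx0 : (0:ℝ) < x := hx.1
    have hD : 0 < 2 - Real.log x := hden x hx.1 hx.2.le
    have h2 : HasDerivAt (fun s : ℝ => 2 - Real.log s) (-x⁻¹) x := by
      exact ((hasDerivAt_const x (2:ℝ)).sub (Real.hasDerivAt_log hx0.ne')).congr_deriv (by simp)
    have h3 := (h2.inv hD.ne').const_mul C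
    have h4 : HasDerivAt (fun s : ℝ => C / (2 - Real.log s))
        (C * (- -x⁻¹ / (2 - Real.log x) ^ 2)) x := by
      simpa [div_eq_mul_inv] using h3
    refine HasDerivAt.hasDerivWithinAt ?_
    refine h4.congr_deriv ?_
    field_simp
  · rw [hint]
    intro x hx
    have hx0 : (0:ℝ) < x := hx.1
    have hD : 0 < 2 - Real.log x := hden x hx.1 hx.2.le
    have h2 : HasDerivAt (fun s : ℝ => 2 - Real.log s) (-x⁻¹) x := by
      exact ((hasDerivAt_const x (2:ℝ)).sub (Real.hasDerivAt_log hx0.ne')).congr_deriv (by simp)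
    have hu : HasDerivAt (fun s : ℝ => s * (2 - Real.log s)^2)
        (1 * (2 - Real.log x)^2 + x * (2 * (2 - Real.log x) ^ 1 * -x⁻¹)) x :=
      (hasDerivAt_id x).mul (h2.pow 2)
    have hune : x * (2 - Real.log x)^2 ≠ 0 := by positivity
    have h5 := (hu.inv hune).const_mul C
    have h6 : HasDerivAt (fun s : ℝ => C / (s * (2 - Real.log s)^2))
        (C * (-(1 * (2 - Real.log x) ^ 2 + x * (2 * (2 - Real.log x) ^ 1 * -x⁻¹)) /
          (x * (2 - Real.log x) ^ 2) ^ 2)) x := by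
      simpa [div_eq_mul_inv] using h5
    refine HasDerivAt.hasDerivWithinAt ?_
    refine h6.congr_deriv ?_
    field_simp
    ring
  · rw [hint]
    intro x hx
    have hx0 : (0:ℝ) < x := hx.1
    have hD : 0 < 2 - Real.log x := hden x hx.1 hx.2.le
    have hlog : Real.log x ≤ 0 := Real.log_nonpos hx0.le hx.2.le
    have hdenpos : 0 < x^2 * (2 - Real.log x)^3 := by positivity
    exact div_nonpos_of_nonpos_of_nonneg (mul_nonpos_of_nonneg_of_nonpos hC hlog) hdenpos.le

noncomputable def myOmega (C : ℝ) : ℝ → ℝ :=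
  fun r => if r ≤ 0 then 0 else C / (2 - Real.log (min r 1))

lemma myOmega_den_pos {r : ℝ} (hr : 0 < r) : 0 < 2 - Real.log (min r 1) := by
  have h1 : Real.log (min r 1) ≤ 0 := Real.log_nonpos (lt_min hr one_pos).le (min_le_right r 1)
  linarith

lemma myOmega_pos_eq {C r : ℝ} (hr : 0 < r) :
    myOmega C r = C / (2 - Real.log (min r 1)) := if_neg (not_le.mpr hr)

lemma myOmega_zero (C : ℝ) : myOmega C 0 = 0 := if_pos le_rfl

lemma myOmega_nonneg {C : ℝ} (hC : 0 ≤ C) (r : ℝ) : 0 ≤ myOmega C r := by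
  unfold myOmega
  split
  · exact le_rfl
  · next h => exact div_nonneg hC (myOmega_den_pos (not_le.mp h)).le

lemma myOmega_mono {C : ℝ} (hC : 0 ≤ C) : MonotoneOn (myOmega C) (Set.Ici 0) := by
  intro x hx y _ hxy
  rcases le_or_gt x 0 with h | h
  · rw [show x = 0 from le_antisymm h hx, myOmega_zero]
    exact myOmega_nonneg hC y
  · have hy : 0 < y := h.trans_le hxy
    rw [myOmega_pos_eq h, myOmega_pos_eq hy]
    have hmin : min x 1 ≤ min y 1 := min_le_min hxy le_rfl
    have hlog : Real.log (min x 1) ≤ Real.log (min y 1) :=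
      Real.log_le_log (lt_min h one_pos) hmin
    exact div_le_div_of_nonneg_left hC (myOmega_den_pos hy) (by linarith)

lemma myOmega_ray {C : ℝ} (hC : 0 ≤ C) {y b : ℝ} (hy : 0 < y) (hb : 0 ≤ b) (hb1 : b ≤ 1) :
    b * myOmega C y ≤ myOmega C (b * y) := by
  rcases eq_or_lt_of_le hb with hb0 | hb0
  · rw [← hb0]
    simp [myOmega_zero]
  · have hby : 0 < b * y := mul_pos hb0 hy
    rw [myOmega_pos_eq hy, myOmega_pos_eq hby]
    have hmy : 0 < min y 1 := lt_min hy one_pos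
    have hDy : 0 < 2 - Real.log (min y 1) := myOmega_den_pos hy
    have hDby : 0 < 2 - Real.log (min (b * y) 1) := myOmega_den_pos hby
    rw [mul_div_assoc'] -- b * (C / D) = (b*C)/D ?
    rw [div_le_div_iff₀ hDy hDby]
    -- b * C * (2 - log m_by) ≤ C * (2 - log m_y)
    have key : b * (2 - Real.log (min (b * y) 1)) ≤ 2 - Real.log (min y 1) := by
      have h1 : b * min y 1 ≤ min (b * y) 1 := by
        refine le_min (mul_le_mul_of_nonneg_left (min_le_left y 1) hb) ?_
        calc b * min y 1 ≤ 1 * 1 := by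
              apply mul_le_mul hb1 (min_le_right y 1) hmy.le zero_le_one
          _ = 1 := mul_one 1
      have h2 : Real.log (b * min y 1) ≤ Real.log (min (b * y) 1) :=
        Real.log_le_log (mul_pos hb0 hmy) h1
      have h3 : Real.log (b * min y 1) = Real.log b + Real.log (min y 1) :=
        Real.log_mul hb0.ne' hmy.ne'
      have h4 : Real.log b ≥ 1 - 1/b := by
        have := Real.log_le_sub_one_of_pos (show (0:ℝ) < 1/b by positivity)
        rw [Real.log_div one_ne_zero hb0.ne', Real.log_one] at this
        linarith
      have h5 : b * Real.log b ≥ b - 1 := by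
        have := mul_le_mul_of_nonneg_left h4 hb
        have hb' : b * (1 - 1/b) = b - 1 := by field_simp
        linarith [mul_le_mul_of_nonneg_left h4 hb, hb'.ge]
      have h6 : Real.log (min y 1) ≤ 0 := Real.log_nonpos hmy.le (min_le_right y 1)
      nlinarith [h2, h3, h5, h6, hb1, hb0]
    calc b * C * (2 - Real.log (min (b * y) 1)) = C * (b * (2 - Real.log (min (b * y) 1))) := by
          ring
      _ ≤ C * (2 - Real.log (min y 1)) := mul_le_mul_of_nonneg_left key hC

lemma myOmega_f_mono {C : ℝ} (hC : 0 ≤ C) {s t : ℝ} (hs : 0 < s) (hst : s ≤ t) (ht : t ≤ 1) :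
    C / (2 - Real.log s) ≤ C / (2 - Real.log t) := by
  have ht0 : 0 < t := hs.trans_le hst
  have hlog : Real.log s ≤ Real.log t := Real.log_le_log hs hst
  have hlt : Real.log t ≤ 0 := Real.log_nonpos ht0.le ht
  exact div_le_div_of_nonneg_left hC (by linarith) (by linarith)

lemma myOmega_concaveOn {C : ℝ} (hC : 0 ≤ C) : ConcaveOn ℝ (Set.Ici 0) (myOmega C) := by
  refine ⟨convex_Ici 0, ?_⟩
  intro x hx y hy a b ha hb hab
  simp only [smul_eq_mul]
  rcases eq_or_lt_of_le (Set.mem_Ici.mp hx) with hx0 | hx0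
  · rcases eq_or_lt_of_le (Set.mem_Ici.mp hy) with hy0 | hy0
    · simp [← hx0, ← hy0, myOmega_zero]
    · rw [← hx0]
      simpa [myOmega_zero] using myOmega_ray hC hy0 hb (by linarith : b ≤ 1)
  · rcases eq_or_lt_of_le (Set.mem_Ici.mp hy) with hy0 | hy0
    · rw [← hy0]
      simpa [myOmega_zero] using myOmega_ray hC hx0 ha (by linarith : a ≤ 1)
    · -- both positive
      set mx := min x 1 with hmx
      set my := min y 1 with hmy
      have hmx0 : 0 < mx := lt_min hx0 one_pos
      have hmy0 : 0 < my := lt_min hy0 one_pos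
      have hmx1 : mx ≤ 1 := min_le_right x 1
      have hmy1 : my ≤ 1 := min_le_right y 1
      have hz : 0 < a * x + b * y := by nlinarith [lt_min hx0 hy0, min_le_left x y, min_le_right x y]
      have hw0 : 0 < a * mx + b * my := by nlinarith [lt_min hmx0 hmy0, min_le_left mx my, min_le_right mx my]
      have hw1 : a * mx + b * my ≤ 1 := by nlinarith
      have hstep1 := (concave_aux C hC).2 (x := mx) (y := my) ⟨hmx0, hmx1⟩ ⟨hmy0, hmy1⟩ ha hb hab
      simp only [smul_eq_mul] at hstep1
      have hle : a * mx + b * my ≤ min (a * x + b * y) 1 := by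
        refine le_min ?_ hw1
        have : mx ≤ x := min_le_left x 1
        have : my ≤ y := min_le_left y 1
        nlinarith [min_le_left x 1, min_le_left y 1]
      have hstep2 : C / (2 - Real.log (a * mx + b * my)) ≤
          C / (2 - Real.log (min (a * x + b * y) 1)) :=
        myOmega_f_mono hC hw0 hle (min_le_right _ 1)
      rw [myOmega_pos_eq hx0, myOmega_pos_eq hy0, myOmega_pos_eq hz]
      calc a * (C / (2 - Real.log mx)) + b * (C / (2 - Real.log my))
          ≤ C / (2 - Real.log (a * mx + b * my)) := hstep1
        _ ≤ _ := hstep2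


theorem stmt_6 (n : ℕ) (Ω : Set (EuclideanSpace ℝ (Fin n))) (hΩ : Bornology.IsBounded Ω)
    (p : EuclideanSpace ℝ (Fin n) → ℝ) (hp : Continuous p) :
    (∃ cl : ℝ, 0 < cl ∧ ∀ x ∈ Ω, ∀ y ∈ Ω, dist x y ≤ 1 / 2 →
        |p x - p y| ≤ cl / (-Real.log (dist x y))) ↔
      (∃ ω : ℝ → ℝ, MonotoneOn ω (Set.Ici 0) ∧ ConcaveOn ℝ (Set.Ici 0) ω ∧ ω 0 = 0 ∧
        (∀ r : ℝ, 0 ≤ r → 0 ≤ ω r) ∧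
        (∀ x ∈ Ω, ∀ y ∈ Ω, |p x - p y| ≤ ω (dist x y)) ∧
        ∃ cl' : ℝ, 0 < cl' ∧ ∀ r : ℝ, 0 < r → r ≤ 1 / 2 → ω r * Real.log (1 / r) ≤ cl') := by
  have hlog2 : 0 < Real.log 2 := Real.log_pos one_lt_two
  constructor
  · rintro ⟨cl, hcl, hlh⟩
    obtain ⟨M, hM⟩ := hΩ.isCompact_closure.exists_bound_of_continuousOn hp.continuousOn
    set B : ℝ := 2 * max M 0 with hBdef
    have hB0 : 0 ≤ B := by positivity
    have hpB : ∀ x ∈ Ω, ∀ y ∈ Ω, |p x - p y| ≤ B := by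
      intro x hx y hy
      have h1 : |p x| ≤ max M 0 := by
        have := hM x (subset_closure hx); rw [Real.norm_eq_abs] at this
        exact this.trans (le_max_left _ _)
      have h2 : |p y| ≤ max M 0 := by
        have := hM y (subset_closure hy); rw [Real.norm_eq_abs] at this
        exact this.trans (le_max_left _ _)
      calc |p x - p y| ≤ |p x| + |p y| := abs_sub _ _
        _ ≤ B := by rw [hBdef]; linarith
    set C : ℝ := cl + 2 * cl / Real.log 2 + 3 * (B + 1) with hCdef
    have ht0 : 0 ≤ 2 * cl / Real.log 2 := by positivity
    have hC0 : 0 < C := by positivity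
    refine ⟨myOmega C, myOmega_mono hC0.le, myOmega_concaveOn hC0.le, myOmega_zero C,
      fun r _ => myOmega_nonneg hC0.le r, ?_, C, hC0, ?_⟩
    · intro x hx y hy
      set d := dist x y with hd
      have hd0 : (0:ℝ) ≤ d := dist_nonneg
      rcases eq_or_lt_of_le hd0 with h0 | h0
      · have hxy : x = y := dist_eq_zero.mp h0.symm
        simp [hxy, ← h0, myOmega_zero]
      · rcases le_or_gt d (1/2) with hdle | hdgt
        · have hle := hlh x hx y hy hdle
          have hd1 : d ≤ 1 := by linarith
          have hL : Real.log 2 ≤ -Real.log d := by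
            have h := Real.log_le_log h0 hdle
            rw [Real.log_div one_ne_zero two_ne_zero, Real.log_one] at h
            linarith
          have hLpos : 0 < -Real.log d := lt_of_lt_of_le hlog2 hL
          have hden : 0 < 2 - Real.log d := by linarith
          rw [myOmega_pos_eq h0, min_eq_left hd1]
          refine hle.trans ?_
          rw [div_le_div_iff₀ hLpos hden, hCdef]
          have h2 : 2 * cl / Real.log 2 * Real.log 2 = 2 * cl := by field_simp
          nlinarith [mul_nonneg ht0 (sub_nonneg.mpr hL),
            mul_nonneg (by positivity : (0:ℝ) ≤ 3 * (B + 1)) hLpos.le]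
        · have key : C / 3 ≤ myOmega C d := by
            rw [myOmega_pos_eq h0]
            have hmin : (1:ℝ)/2 ≤ min d 1 := le_min (by linarith) (by norm_num)
            have hlog : Real.log (1/2) ≤ Real.log (min d 1) :=
              Real.log_le_log (by norm_num) hmin
            rw [Real.log_div one_ne_zero two_ne_zero, Real.log_one] at hlog
            have hden : 2 - Real.log (min d 1) ≤ 3 := by
              have := Real.log_le_sub_one_of_pos (by norm_num : (0:ℝ) < 2)
              linarith
            exact div_le_div_of_nonneg_left hC0.le (myOmega_den_pos h0) hden
          refine (hpB x hx y hy).trans (le_trans ?_ key)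
          rw [hCdef]
          linarith
    · intro r hr hr2
      rw [myOmega_pos_eq hr, min_eq_left (by linarith : r ≤ 1), one_div, Real.log_inv]
      have hL : Real.log 2 ≤ -Real.log r := by
        have h := Real.log_le_log hr hr2
        rw [Real.log_div one_ne_zero two_ne_zero, Real.log_one] at h
        linarith
      have hden : 0 < 2 - Real.log r := by linarith
      rw [div_mul_eq_mul_div, div_le_iff₀ hden]
      nlinarith [hC0.le]
  · rintro ⟨ω, hmono, hconc, hω0, hωnn, hbd, cl', hcl', hsup⟩
    refine ⟨cl', hcl', ?_⟩
    intro x hx y hy hdle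
    rcases eq_or_lt_of_le (dist_nonneg : (0:ℝ) ≤ dist x y) with h0 | h0
    · have hxy : x = y := dist_eq_zero.mp h0.symm
      simp [hxy]
    · have hs := hsup (dist x y) h0 hdle
      rw [one_div, Real.log_inv] at hs
      have hL : 0 < -Real.log (dist x y) := by
        have : Real.log (dist x y) < 0 := Real.log_neg h0 (by linarith)
        linarith
      refine (hbd x hx y hy).trans ?_
      rw [le_div_iff₀ hL]
      exact hs
end

section
/- Let 0 < ε < 1, 0 < δ ≤ 1/8, R > 0, and suppose Ω ⊂ ℝⁿ is (δ,R)-Reifenberg flat. Let C ⊆ D ⊆ Ω be measurable sets and 0 < R₀ ≤ R. Assume (i) |C| ≤ (1/1000)ⁿ ε |B_{R₀}| and (ii) for every x₀ ∈ Ω and r ∈ (0, R₀/1000], if |C ∩ B_r(x₀)| ≥ ε |B_r(x₀)| then B_r(x₀) ∩ Ω ⊆ D. Then |C| ≤ ε (10/(1−δ))ⁿ |D| ≤ ε (80/7)ⁿ |D|. -/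
open MeasureTheory Set Metric Filter
open scoped RealInnerProductSpace ENNReal Topology


lemma density_lemma (n : ℕ) (δ R : ℝ) (hn : 0 < n) (hδ : 0 < δ) (hδ1 : δ < 1) (hR : 0 < R)
    (Ω : Set (EuclideanSpace ℝ (Fin n))) (hopen : IsOpen Ω)
    (hreif : ∀ x₀ ∈ frontier Ω, ∀ r : ℝ, 0 < r → r ≤ R →
      ∃ ν : EuclideanSpace ℝ (Fin n), ‖ν‖ = 1 ∧
        {y ∈ Metric.ball x₀ r | δ * r < ⟪ν, y - x₀⟫} ⊆ Metric.ball x₀ r ∩ Ω ∧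
        Metric.ball x₀ r ∩ Ω ⊆ {y ∈ Metric.ball x₀ r | -δ * r < ⟪ν, y - x₀⟫})
    (x : EuclideanSpace ℝ (Fin n)) (hx : x ∈ Ω) (r : ℝ) (hr : 0 < r) (hrR : r ≤ R) :
    ENNReal.ofReal (((1 - δ)/3 * r) ^ n) * volume (ball (0 : EuclideanSpace ℝ (Fin n)) 1)
      ≤ volume (ball x r ∩ Ω) := by
  set θ : ℝ := (1 - δ)/3 with hθdef
  have hδ0 : (0:ℝ) < 1 - δ := by linarith
  have hθ0 : 0 < θ := by rw [hθdef]; linarith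
  have hθ3 : θ ≤ 1/3 := by rw [hθdef]; linarith
  have hvol : ∀ (c : EuclideanSpace ℝ (Fin n)) (ρ : ℝ), 0 ≤ ρ →
      volume (ball c ρ) = ENNReal.ofReal (ρ ^ n)
        * volume (ball (0 : EuclideanSpace ℝ (Fin n)) 1) := by
    intro c ρ hρ
    haveI : Nontrivial (EuclideanSpace ℝ (Fin n)) := by
      have : Nonempty (Fin n) := ⟨⟨0, hn⟩⟩
      infer_instance
    rw [Measure.addHaar_ball volume c hρ, finrank_euclideanSpace_fin]
  -- reduce to finding an inscribed ball of radius ≥ θ * r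
  suffices h : ∃ c ρ, θ * r ≤ ρ ∧ ball c ρ ⊆ ball x r ∩ Ω by
    obtain ⟨c, ρ, hρ, hsub⟩ := h
    calc ENNReal.ofReal ((θ * r) ^ n) * volume (ball (0 : EuclideanSpace ℝ (Fin n)) 1)
        ≤ ENNReal.ofReal (ρ ^ n) * volume (ball (0 : EuclideanSpace ℝ (Fin n)) 1) := by gcongr
      _ = volume (ball c ρ) := (hvol c ρ (le_trans (by positivity) hρ)).symm
      _ ≤ volume (ball x r ∩ Ω) := measure_mono hsub
  by_cases hc : ball x (θ * r) ⊆ Ω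
  · exact ⟨x, θ * r, le_refl _, subset_inter (ball_subset_ball (by nlinarith)) hc⟩
  · obtain ⟨z, hz, hzΩ⟩ : ∃ z ∈ ball x (θ * r), z ∉ Ω := by
      rcases not_subset.1 hc with ⟨z, hz1, hz2⟩; exact ⟨z, hz1, hz2⟩
    -- there is a frontier point on the segment from x to z
    obtain ⟨x₀, hx₀f, hx₀s⟩ : ∃ x₀ ∈ frontier Ω, x₀ ∈ segment ℝ x z := by
      by_contra hcon
      push_neg at hcon
      have hsub : segment ℝ x z ⊆ Ω ∪ (closure Ω)ᶜ := by
        intro y hy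
        by_cases hyΩ : y ∈ Ω
        · exact Or.inl hyΩ
        · refine Or.inr fun hyc => hcon y ?_ hy
          rw [hopen.frontier_eq]
          exact ⟨hyc, hyΩ⟩
      have := (convex_segment x z).isPreconnected.subset_left_of_subset_union
        hopen (isClosed_closure.isOpen_compl)
        (disjoint_compl_right.mono_left subset_closure) hsub
        ⟨x, left_mem_segment ℝ x z, hx⟩
      exact hzΩ (this (right_mem_segment ℝ x z))
    have hx₀ball : x₀ ∈ ball x (θ * r) :=
      (convex_ball x (θ * r)).segment_subset (mem_ball_self (by positivity)) hz hx₀s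
    set s : ℝ := (1 - θ) * r with hsdef
    have hs0 : 0 < s := by rw [hsdef]; nlinarith
    have hsR : s ≤ R := le_trans (by nlinarith) hrR
    obtain ⟨ν, hν, hflat, -⟩ := hreif x₀ hx₀f s hs0 hsR
    refine ⟨x₀ + ((1 + δ)/2 * s) • ν, (1 - δ)/2 * s, by rw [hsdef, hθdef]; nlinarith [mul_nonneg (mul_nonneg hδ.le hδ0.le) hr.le], ?_⟩
    intro y hy
    rw [mem_ball, dist_eq_norm] at hy
    have hnorm_c : ‖((1 + δ)/2 * s) • ν‖ = (1 + δ)/2 * s := by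
      rw [norm_smul, hν, mul_one, Real.norm_eq_abs, abs_of_pos (by positivity)]
    have hyx₀ : ‖y - x₀‖ < s := by
      have h1 : y - x₀ = (y - (x₀ + ((1 + δ)/2 * s) • ν)) + ((1 + δ)/2 * s) • ν := by abel
      calc ‖y - x₀‖ ≤ ‖y - (x₀ + ((1 + δ)/2 * s) • ν)‖ + ‖((1 + δ)/2 * s) • ν‖ := by
            rw [h1]; exact norm_add_le _ _
        _ < (1 - δ)/2 * s + (1 + δ)/2 * s := by rw [hnorm_c]; linarith
        _ = s := by ring
    have hinner : δ * s < ⟪ν, y - x₀⟫ := by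
      have h1 : y - x₀ = (y - (x₀ + ((1 + δ)/2 * s) • ν)) + ((1 + δ)/2 * s) • ν := by abel
      rw [h1, inner_add_right, real_inner_smul_right, real_inner_self_eq_norm_sq, hν]
      have h2 : |⟪ν, y - (x₀ + ((1 + δ)/2 * s) • ν)⟫| ≤ ‖y - (x₀ + ((1 + δ)/2 * s) • ν)‖ := by
        calc |⟪ν, y - (x₀ + ((1 + δ)/2 * s) • ν)⟫| ≤ ‖ν‖ * ‖y - (x₀ + ((1 + δ)/2 * s) • ν)‖ :=
              abs_real_inner_le_norm _ _
          _ = ‖y - (x₀ + ((1 + δ)/2 * s) • ν)‖ := by rw [hν, one_mul]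
      have h3 := neg_le_of_abs_le h2
      nlinarith
    have hyΩ : y ∈ ball x₀ s ∩ Ω := hflat ⟨by rw [mem_ball, dist_eq_norm]; exact hyx₀, hinner⟩
    refine ⟨?_, hyΩ.2⟩
    rw [mem_ball, dist_eq_norm]
    have hx₀x : ‖x₀ - x‖ < θ * r := by rw [mem_ball, dist_eq_norm] at hx₀ball; exact hx₀ball
    calc ‖y - x‖ ≤ ‖y - x₀‖ + ‖x₀ - x‖ := by
          have : y - x = (y - x₀) + (x₀ - x) := by abel
          rw [this]; exact norm_add_le _ _
      _ < s + θ * r := by linarith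
      _ = r := by rw [hsdef]; ring


lemma ball_measure_eq (n : ℕ) (hn : 0 < n) (c : EuclideanSpace ℝ (Fin n)) (ρ : ℝ) (hρ : 0 ≤ ρ) :
    volume (ball c ρ) = ENNReal.ofReal (ρ ^ n) * volume (ball (0 : EuclideanSpace ℝ (Fin n)) 1) := by
  haveI : Nontrivial (EuclideanSpace ℝ (Fin n)) := by
    have : Nonempty (Fin n) := ⟨⟨0, hn⟩⟩
    infer_instance
  rw [Measure.addHaar_ball volume c hρ, finrank_euclideanSpace_fin]

lemma cball_measure_eq (n : ℕ) (hn : 0 < n) (c : EuclideanSpace ℝ (Fin n)) (ρ : ℝ) :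
    volume (closedBall c ρ) = volume (ball c ρ) := by
  haveI : Nontrivial (EuclideanSpace ℝ (Fin n)) := by
    have : Nonempty (Fin n) := ⟨⟨0, hn⟩⟩
    infer_instance
  exact Measure.addHaar_closedBall_eq_addHaar_ball volume c ρ

lemma inter_cball_measure_eq (n : ℕ) (hn : 0 < n) (A : Set (EuclideanSpace ℝ (Fin n)))
    (c : EuclideanSpace ℝ (Fin n)) (ρ : ℝ) :
    volume (A ∩ closedBall c ρ) = volume (A ∩ ball c ρ) := by
  haveI : Nontrivial (EuclideanSpace ℝ (Fin n)) := by
    have : Nonempty (Fin n) := ⟨⟨0, hn⟩⟩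
    infer_instance
  apply le_antisymm
  · calc volume (A ∩ closedBall c ρ) ≤ volume ((A ∩ ball c ρ) ∪ sphere c ρ) := by
          apply measure_mono
          intro y hy
          rcases hy with ⟨hyA, hyc⟩
          rw [← ball_union_sphere] at hyc
          rcases hyc with h | h
          · exact Or.inl ⟨hyA, h⟩
          · exact Or.inr h
      _ ≤ volume (A ∩ ball c ρ) + volume (sphere c ρ) := measure_union_le _ _
      _ = volume (A ∩ ball c ρ) := by rw [Measure.addHaar_sphere volume c ρ, add_zero]
  · exact measure_mono (inter_subset_inter_right _ ball_subset_closedBall)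

lemma selection (n : ℕ) (hn : 0 < n) (ε : ℝ) (hε1 : ε < 1)
    (C : Set (EuclideanSpace ℝ (Fin n))) (r₁ : ℝ) (hr₁ : 0 < r₁)
    (hμC : volume C ≤ ENNReal.ofReal ε *
      (ENNReal.ofReal (r₁ ^ n) * volume (ball (0 : EuclideanSpace ℝ (Fin n)) 1)))
    (x : EuclideanSpace ℝ (Fin n))
    (hx : Tendsto (fun r => volume (C ∩ closedBall x r) / volume (closedBall x r))
      (𝓝[>] 0) (𝓝 1)) :
    ∃ ρ : ℝ, 0 < ρ ∧ ρ ≤ r₁ ∧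
      ENNReal.ofReal ε * volume (ball x ρ) ≤ volume (C ∩ ball x ρ) ∧
      volume (C ∩ ball x (10/3 * ρ)) ≤ ENNReal.ofReal ε * volume (ball x (10/3 * ρ)) := by
  set e := ENNReal.ofReal ε with hedef
  set S := {t : ℝ | 0 < t ∧ t ≤ r₁ ∧ e * volume (ball x t) ≤ volume (C ∩ ball x t)} with hSdef
  have hSne : S.Nonempty := by
    have h1' : ∀ᶠ t in 𝓝[>] (0:ℝ),
        e < volume (C ∩ closedBall x t) / volume (closedBall x t) :=
      hx.eventually_const_lt (by simpa [hedef] using ENNReal.ofReal_lt_one.2 hε1)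
    have h2' : Ioc (0:ℝ) r₁ ∈ 𝓝[>] (0:ℝ) := Ioc_mem_nhdsGT_of_mem ⟨le_refl 0, hr₁⟩
    obtain ⟨t, ht1, ht2⟩ := (h1'.and h2').exists
    refine ⟨t, ht2.1, ht2.2, ?_⟩
    have hlt : e * volume (closedBall x t) < volume (C ∩ closedBall x t) :=
      ENNReal.mul_lt_of_lt_div ht1
    rw [cball_measure_eq n hn, inter_cball_measure_eq n hn] at hlt
    exact hlt.le
  have hbdd : BddAbove S := ⟨r₁, fun t ht => ht.2.1⟩
  set T := sSup S with hTdef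
  obtain ⟨t₀, ht₀⟩ := id hSne
  have hT0 : 0 < T := lt_of_lt_of_le ht₀.1 (le_csSup hbdd ht₀)
  obtain ⟨ρ, hρS, hρT⟩ := exists_lt_of_lt_csSup hSne (half_lt_self hT0)
  refine ⟨ρ, hρS.1, hρS.2.1, hρS.2.2, ?_⟩
  have h103 : T < 10/3 * ρ := by nlinarith
  set ρ' := 10/3 * ρ with hρ'def
  have hρ'0 : 0 < ρ' := mul_pos (by norm_num) hρS.1
  by_cases hcase : ρ' ≤ r₁
  · have hnotS : ρ' ∉ S := fun h => absurd (le_csSup hbdd h) (not_le.2 h103)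
    rw [hSdef] at hnotS
    simp only [mem_setOf_eq, not_and] at hnotS
    exact le_of_lt (not_le.1 (hnotS hρ'0 hcase))
  · calc volume (C ∩ ball x ρ') ≤ volume C := measure_mono inter_subset_left
      _ ≤ e * (ENNReal.ofReal (r₁ ^ n) * volume (ball (0:EuclideanSpace ℝ (Fin n)) 1)) := hμC
      _ ≤ e * (ENNReal.ofReal (ρ' ^ n) * volume (ball (0:EuclideanSpace ℝ (Fin n)) 1)) := by
          gcongr
          exact le_of_lt (not_le.1 hcase)
      _ = e * volume (ball x ρ') := by rw [ball_measure_eq n hn x ρ' hρ'0.le]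

theorem stmt_11 (n : ℕ) (ε δ R : ℝ) (hε : 0 < ε) (hε1 : ε < 1) (hδ : 0 < δ)
    (hδ' : δ ≤ 1 / 8) (hR : 0 < R) (Ω C D : Set (EuclideanSpace ℝ (Fin n)))
    (hopen : IsOpen Ω) (hbdd : Bornology.IsBounded Ω)
    (hreif : ∀ x₀ ∈ frontier Ω, ∀ r : ℝ, 0 < r → r ≤ R →
      ∃ ν : EuclideanSpace ℝ (Fin n), ‖ν‖ = 1 ∧
        {y ∈ Metric.ball x₀ r | δ * r < ⟪ν, y - x₀⟫} ⊆ Metric.ball x₀ r ∩ Ω ∧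
        Metric.ball x₀ r ∩ Ω ⊆ {y ∈ Metric.ball x₀ r | -δ * r < ⟪ν, y - x₀⟫})
    (hC : MeasurableSet C) (hD : MeasurableSet D) (hCD : C ⊆ D) (hDΩ : D ⊆ Ω)
    (R₀ : ℝ) (hR₀ : 0 < R₀) (hR₀R : R₀ ≤ R)
    (h1 : volume C ≤ ENNReal.ofReal ((1 / 1000) ^ n * ε) *
      volume (Metric.ball (0 : EuclideanSpace ℝ (Fin n)) R₀))
    (h2 : ∀ x₀ ∈ Ω, ∀ r : ℝ, 0 < r → r ≤ R₀ / 1000 →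
      ENNReal.ofReal ε * volume (Metric.ball x₀ r) ≤ volume (C ∩ Metric.ball x₀ r) →
      Metric.ball x₀ r ∩ Ω ⊆ D) :
    volume C ≤ ENNReal.ofReal (ε * (10 / (1 - δ)) ^ n) * volume D ∧
      ε * (10 / (1 - δ)) ^ n ≤ ε * (80 / 7 : ℝ) ^ n := by
  have hδ1 : δ < 1 := lt_of_le_of_lt hδ' (by norm_num)
  have h1δ : (0:ℝ) < 1 - δ := by linarith
  constructor
  case right =>
    have h10 : (10:ℝ)/(1-δ) ≤ 80/7 := by
      rw [div_le_div_iff₀ h1δ (by norm_num)]; nlinarith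
    have h10pos : (0:ℝ) ≤ 10/(1-δ) := by positivity
    exact mul_le_mul_of_nonneg_left (pow_le_pow_left₀ h10pos h10 n) hε.le
  case left =>
    rcases Nat.eq_zero_or_pos n with hn | hn
    · -- n = 0
      subst hn
      simp only [pow_zero, mul_one]
      rcases eq_empty_or_nonempty C with rfl | ⟨c, hc⟩
      · simp
      · exfalso
        have hsub : ball (0 : EuclideanSpace ℝ (Fin 0)) R₀ ⊆ C := fun y _ => by
          rwa [Subsingleton.elim y c]
        have hle : volume (ball (0 : EuclideanSpace ℝ (Fin 0)) R₀) ≤ volume C :=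
          measure_mono hsub
        have h1' : volume C ≤ ENNReal.ofReal ε * volume (ball (0 : EuclideanSpace ℝ (Fin 0)) R₀) := by
          simpa using h1
        have hpos : volume (ball (0 : EuclideanSpace ℝ (Fin 0)) R₀) ≠ 0 :=
          (measure_ball_pos volume 0 hR₀).ne'
        have hfin : volume (ball (0 : EuclideanSpace ℝ (Fin 0)) R₀) ≠ ⊤ :=
          measure_ball_lt_top.ne
        have hlt : ENNReal.ofReal ε * volume (ball (0 : EuclideanSpace ℝ (Fin 0)) R₀)
            < 1 * volume (ball (0 : EuclideanSpace ℝ (Fin 0)) R₀) :=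
          ENNReal.mul_lt_mul_left hpos hfin (ENNReal.ofReal_lt_one.2 hε1)
        rw [one_mul] at hlt
        exact lt_irrefl _ (lt_of_le_of_lt (hle.trans h1') hlt)
    · -- main case
      have hr₁ : (0:ℝ) < R₀/1000 := by positivity
      have hμC : volume C ≤ ENNReal.ofReal ε * (ENNReal.ofReal ((R₀/1000) ^ n)
          * volume (ball (0 : EuclideanSpace ℝ (Fin n)) 1)) := by
        calc volume C ≤ ENNReal.ofReal ((1/1000)^n * ε)
              * volume (ball (0 : EuclideanSpace ℝ (Fin n)) R₀) := h1
          _ = ENNReal.ofReal ((1/1000)^n * ε) * (ENNReal.ofReal (R₀^n)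
              * volume (ball (0 : EuclideanSpace ℝ (Fin n)) 1)) := by
              rw [ball_measure_eq n hn _ R₀ hR₀.le]
          _ = ENNReal.ofReal ε * (ENNReal.ofReal ((R₀/1000)^n)
              * volume (ball (0 : EuclideanSpace ℝ (Fin n)) 1)) := by
              rw [← mul_assoc, ← mul_assoc, ← ENNReal.ofReal_mul (by positivity),
                ← ENNReal.ofReal_mul hε.le]
              congr 2
              rw [div_pow, div_pow, one_pow]
              ring
      set good := {x | x ∈ C ∧ Tendsto (fun r => volume (C ∩ closedBall x r)
        / volume (closedBall x r)) (𝓝[>] 0) (𝓝 1)} with hgooddef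
      have hgoodC : good ⊆ C := fun x hx => hx.1
      have hnull : volume (C \ good) = 0 := by
        have hae := Besicovitch.ae_tendsto_measure_inter_div volume C
        rw [ae_iff, Measure.restrict_apply' hC] at hae
        apply measure_mono_null _ hae
        intro y hy
        exact ⟨fun h => hy.2 ⟨hy.1, h⟩, hy.1⟩
      have hsel := fun x (hx : x ∈ good) =>
        selection n hn ε hε1 C (R₀/1000) hr₁ hμC x hx.2
      choose! rad hrad0 hrad1 hrad3 hrad4 using hsel
      obtain ⟨u, hu_sub, hu_disj, hu_cover⟩ :=
        Vitali.exists_disjoint_subfamily_covering_enlargement_closedBall good id rad (R₀/1000)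
          (fun a ha => hrad1 a ha) (10/3) (by norm_num)
      have hu_cnt : u.Countable := by
        apply hu_disj.countable_of_nonempty_interior
        intro a ha
        have h0 : 0 < rad a := hrad0 a (hu_sub ha)
        simp only [id_eq]
        rw [interior_closedBall a h0.ne']
        exact ⟨a, mem_ball_self h0⟩
      have hmemΩ : ∀ b ∈ u, (b : EuclideanSpace ℝ (Fin n)) ∈ Ω :=
        fun b hb => hDΩ (hCD (hgoodC (hu_sub hb)))
      have hball_sub_D : ∀ b ∈ u, ball b (rad b) ∩ Ω ⊆ D := fun b hb =>
        h2 b (hmemΩ b hb) (rad b) (hrad0 b (hu_sub hb)) (hrad1 b (hu_sub hb))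
          (hrad3 b (hu_sub hb))
      have hdens : ∀ b ∈ u, ENNReal.ofReal (((1-δ)/3 * rad b)^n)
          * volume (ball (0 : EuclideanSpace ℝ (Fin n)) 1) ≤ volume (ball b (rad b) ∩ Ω) :=
        fun b hb => density_lemma n δ R hn hδ hδ1 hR Ω hopen hreif b (hmemΩ b hb) (rad b)
          (hrad0 b (hu_sub hb))
          (le_trans (hrad1 b (hu_sub hb)) (le_trans (by linarith) hR₀R))
      calc volume C = volume ((C ∩ good) ∪ (C \ good)) := by rw [inter_union_diff]
        _ ≤ volume (C ∩ good) + volume (C \ good) := measure_union_le _ _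
        _ = volume (C ∩ good) := by rw [hnull, add_zero]
        _ ≤ volume (⋃ b ∈ u, (C ∩ closedBall b (10/3 * rad b))) := by
            apply measure_mono
            rintro y ⟨hyC, hyg⟩
            obtain ⟨b, hb, hsub⟩ := hu_cover y hyg
            exact mem_biUnion hb ⟨hyC, hsub (mem_closedBall_self (hrad0 y hyg).le)⟩
        _ ≤ ∑' (b : u), volume (C ∩ closedBall b (10/3 * rad b)) :=
            measure_biUnion_le volume hu_cnt _
        _ ≤ ∑' (b : u), ENNReal.ofReal (ε * (10/(1-δ))^n)
              * volume (ball (b : EuclideanSpace ℝ (Fin n)) (rad b) ∩ Ω) := by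
            apply ENNReal.tsum_le_tsum
            intro b
            have hb := b.2
            have hbrad : 0 < rad b := hrad0 b (hu_sub hb)
            calc volume (C ∩ closedBall b (10/3 * rad b))
                = volume (C ∩ ball (b : EuclideanSpace ℝ (Fin n)) (10/3 * rad b)) :=
                  inter_cball_measure_eq n hn _ _ _
              _ ≤ ENNReal.ofReal ε * volume (ball (b : EuclideanSpace ℝ (Fin n)) (10/3 * rad b)) :=
                  hrad4 b (hu_sub hb)
              _ = ENNReal.ofReal ε * (ENNReal.ofReal ((10/3 * rad b)^n)
                  * volume (ball (0 : EuclideanSpace ℝ (Fin n)) 1)) := by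
                  rw [ball_measure_eq n hn _ _ (by positivity)]
              _ = ENNReal.ofReal (ε * (10/(1-δ))^n) * (ENNReal.ofReal (((1-δ)/3 * rad b)^n)
                  * volume (ball (0 : EuclideanSpace ℝ (Fin n)) 1)) := by
                  rw [← mul_assoc, ← mul_assoc, ← ENNReal.ofReal_mul hε.le,
                    ← ENNReal.ofReal_mul (by positivity)]
                  congr 2
                  have hkey : (10/3 : ℝ) * rad b = (10/(1-δ)) * ((1-δ)/3 * rad b) := by
                    field_simp
                  rw [hkey, mul_pow]
                  ring
              _ ≤ ENNReal.ofReal (ε * (10/(1-δ))^n)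
                  * volume (ball (b : EuclideanSpace ℝ (Fin n)) (rad b) ∩ Ω) := by
                  gcongr
                  exact hdens b hb
        _ = ENNReal.ofReal (ε * (10/(1-δ))^n)
              * ∑' (b : u), volume (ball (b : EuclideanSpace ℝ (Fin n)) (rad b) ∩ Ω) :=
            ENNReal.tsum_mul_left
        _ ≤ ENNReal.ofReal (ε * (10/(1-δ))^n) * volume D := by
            gcongr
            have hdisj : u.PairwiseDisjoint
                (fun b => ball b (rad b) ∩ Ω) := by
              apply hu_disj.mono
              intro b
              exact inter_subset_left.trans ball_subset_closedBall
            have hmeas : ∀ b ∈ u, MeasurableSet (ball b (rad b) ∩ Ω) :=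
              fun b _ => measurableSet_ball.inter hopen.measurableSet
            calc ∑' (b : u), volume (ball (b : EuclideanSpace ℝ (Fin n)) (rad b) ∩ Ω)
                = volume (⋃ b ∈ u, ball b (rad b) ∩ Ω) :=
                  (measure_biUnion hu_cnt hdisj hmeas).symm
              _ ≤ volume D := measure_mono (iUnion₂_subset hball_sub_D)
end
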